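/- Suppose the second order equation u'' + p₁ u' + p₂ u = 0 is disconjugate on [a,b], i.e., the operator L₂ admits a factorization L₂u = v₁v₂ (1/v₂ (u/v₁)')' with v₁, v₂ > 0 on [a,b]. Then every function u ∈ C⁴([a,b]) with u(a)=u(b)=u''(a)=u''(b)=0 and u⁗ + p₁u''' + p₂u'' ≥ 0 on [a,b] (not identically zero) satisfies u > 0 on (a,b). -/

import Mathlib

open Set

/-- If `f` vanishes at both endpoints and its derivative, once positive, stays positive to the
right (within the open interval), then `f ≤ 0` on `[a,b]`. -/
lemma aux_nonpos {f : ℝ → ℝ} {a b : ℝ} (hab : a < b)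
    (hc : ContinuousOn f (Icc a b)) (hd : DifferentiableOn ℝ f (Ioo a b))
    (ha : f a = 0) (hb : f b = 0)
    (hsign : ∀ x ∈ Ioo a b, ∀ y ∈ Ioo a b, x < y → 0 < deriv f x → 0 < deriv f y) :
    ∀ x ∈ Icc a b, f x ≤ 0 := by
  intro c hcm
  by_contra hpos
  push_neg at hpos
  have hca : a < c := hcm.1.lt_of_ne (by rintro rfl; linarith)
  have hcb : c < b := hcm.2.lt_of_ne (by rintro rfl; linarith)
  obtain ⟨ξ1, hξ1, hd1⟩ := exists_deriv_eq_slope f hca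
    (hc.mono (Icc_subset_Icc le_rfl hcm.2))
    (hd.mono (Ioo_subset_Ioo le_rfl hcb.le))
  obtain ⟨ξ2, hξ2, hd2⟩ := exists_deriv_eq_slope f hcb
    (hc.mono (Icc_subset_Icc hcm.1 le_rfl))
    (hd.mono (Ioo_subset_Ioo hca.le le_rfl))
  have h1 : 0 < deriv f ξ1 := by
    rw [hd1, ha]
    have hca' : 0 < c - a := by linarith [hξ1.2]
    exact div_pos (by linarith) hca'
  have h2 : deriv f ξ2 < 0 := by
    rw [hd2, hb]
    have hbc : 0 < b - c := by linarith [hξ2.1]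
    have : (0:ℝ) - f c < 0 := by linarith
    exact div_neg_of_neg_of_pos this hbc
  have hξ1m : ξ1 ∈ Ioo a b := ⟨hξ1.1, hξ1.2.trans hcb⟩
  have hξ2m : ξ2 ∈ Ioo a b := ⟨hca.trans hξ2.1, hξ2.2⟩
  have := hsign ξ1 hξ1m ξ2 hξ2m (hξ1.2.trans hξ2.1) h1
  linarith

/-- The derivative of a function vanishing on an open set vanishes on that set. -/
lemma aux_deriv_zero {f : ℝ → ℝ} {s : Set ℝ} (hs : IsOpen s)
    (h : ∀ x ∈ s, f x = 0) : ∀ x ∈ s, deriv f x = 0 := by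
  intro x hx
  have hev : f =ᶠ[nhds x] (fun _ => (0:ℝ)) :=
    Filter.eventually_of_mem (hs.mem_nhds hx) h
  rw [hev.deriv_eq, deriv_const]

/-- If the second order operator `L₂u = u'' + p₁u' + p₂u` admits a Pólya factorization
`L₂u = v₁ v₂ (1/v₂ (u/v₁)')'` with `v₁, v₂ > 0` on `[a,b]` (i.e. it is disconjugate),
then the fourth order operator `T[0]u = u⁗ + p₁u''' + p₂u''` is inverse positive under
simply supported beam boundary conditions: `T[0]u ⪈ 0` implies `u > 0` on `(a,b)`. -/
theorem stmt5 (a b : ℝ) (hab : a < b) (p1 p2 v1 v2 : ℝ → ℝ)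
    (hp1 : ContDiff ℝ 3 p1) (hp2 : ContDiff ℝ 2 p2)
    (hv1 : ContDiff ℝ 4 v1) (hv2 : ContDiff ℝ 3 v2)
    (hv1pos : ∀ t ∈ Icc a b, 0 < v1 t) (hv2pos : ∀ t ∈ Icc a b, 0 < v2 t)
    (hfact : ∀ w : ℝ → ℝ, ContDiff ℝ 2 w → ∀ t ∈ Icc a b,
      deriv (deriv w) t + p1 t * deriv w t + p2 t * w t =
        v1 t * v2 t * deriv (fun s => deriv (fun r => w r / v1 r) s / v2 s) t)
    (u : ℝ → ℝ) (hu : ContDiff ℝ 4 u)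
    (hua : u a = 0) (hub : u b = 0)
    (hu2a : deriv (deriv u) a = 0) (hu2b : deriv (deriv u) b = 0)
    (hT : ∀ t ∈ Icc a b,
      0 ≤ iteratedDeriv 4 u t + p1 t * iteratedDeriv 3 u t + p2 t * deriv (deriv u) t)
    (hne : ∃ t ∈ Icc a b,
      iteratedDeriv 4 u t + p1 t * iteratedDeriv 3 u t + p2 t * deriv (deriv u) t ≠ 0) :
    ∀ t ∈ Ioo a b, 0 < u t := by
  -- `w = u''`
  set w : ℝ → ℝ := deriv (deriv u) with hw_def
  have hw : ContDiff ℝ 2 w := by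
    have h := ContDiff.iterate_deriv' 2 2 (f := u) (by exact_mod_cast hu)
    rw [hw_def]
    simpa [Function.iterate_succ, Function.comp] using h
  -- the open set where the factorization functions don't vanish
  set U : Set ℝ := v1 ⁻¹' ({0}ᶜ) ∩ v2 ⁻¹' ({0}ᶜ) with hU_def
  have hUopen : IsOpen U :=
    (isOpen_compl_singleton.preimage hv1.continuous).inter
      (isOpen_compl_singleton.preimage hv2.continuous)
  have hIccU : Icc a b ⊆ U := fun t ht =>
    ⟨(hv1pos t ht).ne', (hv2pos t ht).ne'⟩
  -- `g = w / v₁`, `h = g' / v₂`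
  set g : ℝ → ℝ := fun r => w r / v1 r with hg_def
  set h : ℝ → ℝ := fun s => deriv g s / v2 s with hh_def
  have hgC : ContDiffOn ℝ 2 g U := by
    intro x hx
    exact (hw.contDiffAt.div ((hv1.of_le (by norm_num)).contDiffAt) hx.1).contDiffWithinAt
  have hg'C : ContDiffOn ℝ 1 (deriv g) U := hgC.deriv_of_isOpen hUopen (by norm_num)
  have hhC : ContDiffOn ℝ 1 h U :=
    hg'C.div ((hv2.of_le (by norm_num)).contDiffOn) (fun x hx => hx.2)
  -- monotonicity of `h` from the sign of `T[0]u`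
  have e2 : iteratedDeriv 2 u = w := by
    rw [hw_def, show (2:ℕ) = 1 + 1 from rfl, iteratedDeriv_succ, iteratedDeriv_one]
  have e3 : iteratedDeriv 3 u = deriv w := by
    rw [show (3:ℕ) = 2 + 1 from rfl, iteratedDeriv_succ, e2]
  have e4 : iteratedDeriv 4 u = deriv (deriv w) := by
    rw [show (4:ℕ) = 3 + 1 from rfl, iteratedDeriv_succ, e3]
  have hderiv_h_nonneg : ∀ t ∈ Icc a b, 0 ≤ deriv h t := by
    intro t ht
    have hfw := hfact w hw t ht
    simp only [← hg_def, ← hh_def] at hfw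
    have hTt := hT t ht
    rw [e4, e3] at hTt
    have hvv : 0 < v1 t * v2 t := mul_pos (hv1pos t ht) (hv2pos t ht)
    nlinarith [hTt, hfw, hvv]
  have hhmono : MonotoneOn h (Icc a b) := by
    apply monotoneOn_of_deriv_nonneg (convex_Icc a b) (hhC.continuousOn.mono hIccU)
    · rw [interior_Icc]
      intro x hx
      exact ((hhC.differentiableOn one_ne_zero).differentiableAt
        (hUopen.mem_nhds (hIccU (Ioo_subset_Icc_self hx)))).differentiableWithinAt
    · rw [interior_Icc]
      intro x hx
      exact hderiv_h_nonneg x (Ioo_subset_Icc_self hx)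
  -- `g ≤ 0` on `[a,b]`
  have hg_diff : ∀ x ∈ Icc a b, DifferentiableAt ℝ g x := fun x hx =>
    (hgC.differentiableOn (by norm_num)).differentiableAt (hUopen.mem_nhds (hIccU hx))
  have hg_nonpos : ∀ x ∈ Icc a b, g x ≤ 0 := by
    apply aux_nonpos hab
    · exact ContinuousOn.mono (hgC.continuousOn) hIccU
    · exact fun x hx => (hg_diff x (Ioo_subset_Icc_self hx)).differentiableWithinAt
    · rw [hg_def]; simp [← hw_def, hu2a]
    · rw [hg_def]; simp [← hw_def, hu2b]
    · intro x hx y hy hxy hdx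
      have hx' := Ioo_subset_Icc_self hx
      have hy' := Ioo_subset_Icc_self hy
      have hhx : 0 < h x := by
        rw [hh_def]; exact div_pos hdx (hv2pos x hx')
      have hhy : 0 < h y := lt_of_lt_of_le hhx (hhmono hx' hy' hxy.le)
      have : h y = deriv g y / v2 y := by rw [hh_def]
      have hv2y := (hv2pos y hy').ne'
      rw [this] at hhy
      have := (div_pos_iff.mp hhy)
      rcases this with ⟨h1, _⟩ | ⟨_, h2⟩
      · exact h1
      · linarith [hv2pos y hy']
  -- hence `u'' ≤ 0` on `[a,b]`
  have hw_nonpos : ∀ t ∈ Icc a b, w t ≤ 0 := by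
    intro t ht
    have hgt := hg_nonpos t ht
    have hv1t := hv1pos t ht
    have : g t = w t / v1 t := by rw [hg_def]
    rw [this] at hgt
    have := (div_nonpos_iff.mp hgt)
    rcases this with ⟨_, h2⟩ | ⟨h1, _⟩
    · linarith
    · exact h1
  -- `u'` is antitone on `[a,b]`
  have hduC : ContDiff ℝ 3 (deriv u) := by
    have h := ContDiff.iterate_deriv' 3 1 (f := u) (by exact_mod_cast hu)
    simpa using h
  have hd2u : ∀ x, deriv (deriv u) x = w x := fun x => by rw [hw_def]
  have hu'anti : AntitoneOn (deriv u) (Icc a b) := by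
    apply antitoneOn_of_deriv_nonpos (convex_Icc a b)
      ((hu.continuous_deriv (by norm_num)).continuousOn)
      (fun x _ => ((hduC.differentiable (by norm_num)) x).differentiableWithinAt)
    rw [interior_Icc]
    intro x hx
    rw [hd2u]
    exact hw_nonpos x (Ioo_subset_Icc_self hx)
  -- `u ≥ 0` on `[a,b]`
  have huc : Continuous u := hu.continuous
  have hud : Differentiable ℝ u := hu.differentiable (by norm_num)
  have hu_nonneg : ∀ x ∈ Icc a b, 0 ≤ u x := by
    have := aux_nonpos (f := fun t => -u t) hab
      (huc.neg.continuousOn)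
      (fun x _ => (hud x).neg.differentiableWithinAt)
      (by simp [hua]) (by simp [hub])
      (by
        intro x hx y hy hxy hdx
        rw [deriv.fun_neg] at hdx ⊢
        have : deriv u x < 0 := by linarith
        have := hu'anti (Ioo_subset_Icc_self hx) (Ioo_subset_Icc_self hy) hxy.le
        linarith)
    intro x hx
    have h' := this x hx
    linarith
  -- strict positivity
  intro t ht
  by_contra hle
  push_neg at hle
  have hut : u t = 0 := le_antisymm hle (hu_nonneg t (Ioo_subset_Icc_self ht))
  -- `u` has a local minimum at `t`, so `u'(t) = 0`
  have hmin : IsLocalMin u t := by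
    apply Filter.eventually_of_mem (Icc_mem_nhds ht.1 ht.2)
    intro x hx
    rw [hut]
    exact hu_nonneg x hx
  have hdut : deriv u t = 0 := hmin.deriv_eq_zero
  -- `u ≡ 0` on `[a,b]`
  have hzero : ∀ x ∈ Icc a b, u x = 0 := by
    have hmonL : MonotoneOn u (Icc a t) := by
      apply monotoneOn_of_deriv_nonneg (convex_Icc a t) (huc.continuousOn)
        (fun x _ => (hud x).differentiableWithinAt)
      rw [interior_Icc]
      intro x hx
      have hx' : x ∈ Icc a b := ⟨hx.1.le, hx.2.le.trans ht.2.le⟩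
      have := hu'anti hx' (Ioo_subset_Icc_self ht) hx.2.le
      linarith [hdut]
    have hantiR : AntitoneOn u (Icc t b) := by
      apply antitoneOn_of_deriv_nonpos (convex_Icc t b) (huc.continuousOn)
        (fun x _ => (hud x).differentiableWithinAt)
      rw [interior_Icc]
      intro x hx
      have hx' : x ∈ Icc a b := ⟨ht.1.le.trans hx.1.le, hx.2.le⟩
      have := hu'anti (Ioo_subset_Icc_self ht) hx' hx.1.le
      linarith [hdut]
    intro x hx
    rcases le_total x t with hxt | htx
    · have h1 : u a ≤ u x := hmonL ⟨le_rfl, ht.1.le⟩ ⟨hx.1, hxt⟩ hx.1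
      have h2 : u x ≤ u t := hmonL ⟨hx.1, hxt⟩ ⟨ht.1.le, le_rfl⟩ hxt
      rw [hua] at h1; rw [hut] at h2; linarith
    · have h1 : u x ≤ u t := hantiR ⟨le_rfl, ht.2.le⟩ ⟨htx, hx.2⟩ htx
      have h2 : u b ≤ u x := hantiR ⟨htx, hx.2⟩ ⟨ht.2.le, le_rfl⟩ hx.2
      rw [hub] at h2; rw [hut] at h1; linarith
  -- all derivatives of `u` vanish on `(a,b)`, so `T[0]u ≡ 0`, contradiction
  have hz0 : ∀ x ∈ Ioo a b, u x = 0 := fun x hx => hzero x (Ioo_subset_Icc_self hx)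
  have hz1 : ∀ x ∈ Ioo a b, deriv u x = 0 := aux_deriv_zero isOpen_Ioo hz0
  have hz2 : ∀ x ∈ Ioo a b, deriv (deriv u) x = 0 := aux_deriv_zero isOpen_Ioo hz1
  have hz3 : ∀ x ∈ Ioo a b, deriv w x = 0 := by
    apply aux_deriv_zero isOpen_Ioo
    intro x hx
    rw [hw_def]
    exact hz2 x hx
  have hz4 : ∀ x ∈ Ioo a b, deriv (deriv w) x = 0 := aux_deriv_zero isOpen_Ioo hz3
  obtain ⟨t0, ht0, hne0⟩ := hne
  apply hne0
  rw [e4, e3]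
  set F : ℝ → ℝ := fun s =>
    deriv (deriv w) s + p1 s * deriv w s + p2 s * w s with hF_def
  have hFcont : Continuous F := by
    rw [hF_def]
    have h4 : Continuous (deriv (deriv w)) := by
      rw [← e4]; exact hu.continuous_iteratedDeriv 4 (by norm_num)
    have h3 : Continuous (deriv w) := by
      rw [← e3]; exact hu.continuous_iteratedDeriv 3 (by norm_num)
    have h2 : Continuous w := by
      rw [← e2]; exact hu.continuous_iteratedDeriv 2 (by norm_num)
    exact (h4.add (hp1.continuous.mul h3)).add (hp2.continuous.mul h2)
  have hF0 : EqOn F (fun _ => (0:ℝ)) (Ioo a b) := by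
    intro x hx
    simp only [hF_def]
    rw [hz4 x hx, hz3 x hx]
    have : w x = 0 := by rw [hw_def]; exact hz2 x hx
    rw [this]
    ring
  have hFcl : EqOn F (fun _ => (0:ℝ)) (closure (Ioo a b)) :=
    hF0.closure hFcont continuous_const
  have : F t0 = 0 := by
    apply hFcl
    rw [closure_Ioo hab.ne]
    exact ht0
  simpa [hF_def] using this
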